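/- Let X^{(1)}, X^{(2)}, … be i.i.d. copies of a random vector X = (X₁,…,X_d) whose joint distribution function F is a MEV distribution with unit Fréchet marginals, and let I₁, I₂ be disjoint non-empty subsets of {1,…,d}. For x, y > 0 define the sample means M̄₁ = n^{-1} Σ_{i=1}^n max_{j∈I₁} F_j(X_j^{(i)})^{1/x}, M̄₂ = n^{-1} Σ_{i=1}^n max_{j∈I₂} F_j(X_j^{(i)})^{1/y}, M̄₁₂ = n^{-1} Σ_{i=1}^n ( max_{j∈I₁} F_j(X_j^{(i)})^{1/x} ∨ max_{j∈I₂} F_j(X_j^{(i)})^{1/y} ), and the plug-in estimators x ε̃_{I₁} = M̄₁/(1−M̄₁), y ε̃_{I₂} = M̄₂/(1−M̄₂), l̃^{(I₁,I₂)}(x^{-1},y^{-1}) = M̄₁₂/(1−M̄₁₂), and Λ̃_U^{(I₁,I₂)}(x,y) = x ε̃_{I₁} + y ε̃_{I₂} − l̃^{(I₁,I₂)}(x^{-1},y^{-1}). Then, as n → ∞, Λ̃_U^{(I₁,I₂)}(x,y) → Λ_U^{(I₁,I₂)}(x,y) almost surely; in particular the estimator ε̃_{(I₁,I₂)} = Λ̃_U^{(I₁,I₂)}(1,1)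 converges almost surely to ε_{(I₁,I₂)}. -/

import Mathlib

open MeasureTheory Filter Finset

/-- The joint distribution function of the random vector `X` under `μ`. -/
noncomputable def jointCDF {Ω : Type*} [MeasurableSpace Ω] (μ : Measure Ω) {d : ℕ}
    (X : Fin d → Ω → ℝ) (x : Fin d → ℝ) : ℝ :=
  (μ {ω | ∀ i, X i ω ≤ x i}).toReal

/-- The marginal distribution function of the `i`-th coordinate of `X` under `μ`. -/
noncomputable def margCDF {Ω : Type*} [MeasurableSpace Ω] (μ : Measure Ω) {d : ℕ}
    (X : Fin d → Ω → ℝ) (i : Fin d) (u : ℝ) : ℝ :=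
  (μ {ω | X i ω ≤ u}).toReal

/-- `l^{(I₁,I₂)}(x,y) = -log F(a₁,…,a_d)` where `aᵢ = x` on `I₁`, `aᵢ = y` on `I₂` and
`aᵢ = ∞` otherwise (taking the limit of `F` in those arguments, i.e. dropping the
corresponding constraints). -/
noncomputable def mevL {Ω : Type*} [MeasurableSpace Ω] (μ : Measure Ω) {d : ℕ}
    (X : Fin d → Ω → ℝ) (I₁ I₂ : Finset (Fin d)) (x y : ℝ) : ℝ :=
  -Real.log (μ {ω | (∀ i ∈ I₁, X i ω ≤ x) ∧ (∀ j ∈ I₂, X j ω ≤ y)}).toReal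

/-- The extremal coefficient `ε_I = l^{(I,∅)}(1,1)` of the sub-vector `X_I`. -/
noncomputable def extCoef {Ω : Type*} [MeasurableSpace Ω] (μ : Measure Ω) {d : ℕ}
    (X : Fin d → Ω → ℝ) (I : Finset (Fin d)) : ℝ :=
  mevL μ X I ∅ 1 1

/-- `M(I) = max_{i ∈ I} F_i(X_i)`. -/
noncomputable def Msub {Ω : Type*} [MeasurableSpace Ω] (μ : Measure Ω) {d : ℕ}
    (X : Fin d → Ω → ℝ) (I : Finset (Fin d)) (hI : I.Nonempty) (ω : Ω) : ℝ :=
  I.sup' hI fun i => margCDF μ X i (X i ω)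

/-- The stable tail dependence function `l(x₁,…,x_d) = -log F(x₁,…,x_d)`. -/
noncomputable def stdf {Ω : Type*} [MeasurableSpace Ω] (μ : Measure Ω) {d : ℕ}
    (X : Fin d → Ω → ℝ) (x : Fin d → ℝ) : ℝ :=
  -Real.log (jointCDF μ X x)

/-- `X` has a multivariate extreme value (max-stable) distribution with unit Fréchet
marginals under the probability measure `μ`. -/
structure IsMEVFrechet {Ω : Type*} [MeasurableSpace Ω] (μ : Measure Ω) {d : ℕ}
    (X : Fin d → Ω → ℝ) : Prop where
  meas : ∀ i, Measurable (X i)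
  frechet : ∀ i, ∀ u : ℝ, 0 < u → margCDF μ X i u = Real.exp (-u⁻¹)
  maxStable : ∀ t : ℝ, 0 < t → ∀ x : Fin d → ℝ, (∀ i, 0 < x i) →
    jointCDF μ X (fun i => t * x i) ^ t = jointCDF μ X x

section Aux

open ProbabilityTheory

variable {Ω : Type*} [MeasurableSpace Ω] {μ : Measure Ω} [IsProbabilityMeasure μ]
  {d : ℕ} {X : Fin d → Ω → ℝ}

lemma measSet_part (hm : ∀ i, Measurable (X i)) (I : Finset (Fin d)) (a : Fin d → ℝ) :
    MeasurableSet {ω | ∀ j ∈ I, X j ω ≤ a j} := by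
  have h : {ω | ∀ j ∈ I, X j ω ≤ a j} = ⋂ j ∈ I, {ω | X j ω ≤ a j} := by
    ext ω; simp
  rw [h]
  exact MeasurableSet.biInter I.countable_toSet
    fun j _ => measurableSet_le (hm j) measurable_const

lemma margCDF_mono (j : Fin d) : Monotone (margCDF μ X j) := fun u v huv =>
  ENNReal.toReal_mono (measure_ne_top μ _) (measure_mono fun ω h => le_trans h huv)

lemma margCDF_nonneg (j : Fin d) (u : ℝ) : 0 ≤ margCDF μ X j u := ENNReal.toReal_nonneg

lemma margCDF_le_one (j : Fin d) (u : ℝ) : margCDF μ X j u ≤ 1 := by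
  have h := ENNReal.toReal_mono (ENNReal.one_ne_top)
    (prob_le_one (μ := μ) (s := {ω | X j ω ≤ u}))
  simpa [margCDF] using h

lemma ae_pos (hmev : IsMEVFrechet μ X) (j : Fin d) : ∀ᵐ ω ∂μ, 0 < X j ω := by
  have key : (μ {ω | X j ω ≤ 0}).toReal = 0 := by
    have hb : ∀ n : ℕ, (μ {ω | X j ω ≤ 0}).toReal ≤ Real.exp (-((n : ℝ) + 1)) := by
      intro n
      have hpos : (0:ℝ) < ((n:ℝ)+1)⁻¹ := by positivity
      have hsub : {ω | X j ω ≤ 0} ⊆ {ω | X j ω ≤ ((n:ℝ)+1)⁻¹} :=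
        fun ω h => le_trans h (le_of_lt hpos)
      have h1 : (μ {ω | X j ω ≤ 0}).toReal ≤ margCDF μ X j (((n:ℝ)+1)⁻¹) :=
        ENNReal.toReal_mono (measure_ne_top μ _) (measure_mono hsub)
      rwa [hmev.frechet j _ hpos, inv_inv] at h1
    have ht : Tendsto (fun n : ℕ => Real.exp (-((n : ℝ) + 1))) atTop (nhds 0) := by
      apply Real.tendsto_exp_atBot.comp
      rw [tendsto_neg_atBot_iff]
      exact tendsto_atTop_add_const_right _ 1 tendsto_natCast_atTop_atTop
    have h0 := ge_of_tendsto ht (Eventually.of_forall hb)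
    exact le_antisymm h0 ENNReal.toReal_nonneg
  have hμ : μ {ω | X j ω ≤ 0} = 0 := by
    rcases ENNReal.toReal_eq_zero_iff _ |>.1 key with h | h
    · exact h
    · exact absurd h (measure_ne_top μ _)
  rw [ae_iff]
  convert hμ using 2
  ext ω; simp [not_lt]

lemma tendsto_part (I : Finset (Fin d)) (a : Fin d → ℝ) (s : ℝ) (hs : 0 < s) :
    Tendsto (fun n : ℕ => jointCDF μ X (fun i => if i ∈ I then s * a i else s * ((n:ℝ) + 1)))
      atTop (nhds ((μ {ω | ∀ j ∈ I, X j ω ≤ s * a j}).toReal)) := by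
  set S : ℕ → Set Ω := fun n => {ω | ∀ i, X i ω ≤ if i ∈ I then s * a i else s * ((n:ℝ)+1)}
    with hS
  have hmono : Monotone S := by
    intro m n hmn ω hω i
    refine le_trans (hω i) ?_
    by_cases h : i ∈ I
    · simp [h]
    · simp only [if_neg h]
      have hmn' : (m:ℝ) + 1 ≤ (n:ℝ) + 1 := by exact_mod_cast by omega
      nlinarith
  have hunion : ⋃ n, S n = {ω | ∀ j ∈ I, X j ω ≤ s * a j} := by
    ext ω
    simp only [Set.mem_iUnion, hS, Set.mem_setOf_eq]
    constructor
    · rintro ⟨n, hn⟩ j hj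
      have := hn j; rwa [if_pos hj] at this
    · intro h
      obtain ⟨M, hM⟩ := Finite.exists_le (fun i => X i ω)
      obtain ⟨n, hn⟩ := exists_nat_ge (M / s)
      refine ⟨n, fun i => ?_⟩
      by_cases hi : i ∈ I
      · rw [if_pos hi]; exact h i hi
      · rw [if_neg hi]
        have h1 : M ≤ (n:ℝ) * s := (div_le_iff₀ hs).1 hn
        nlinarith [hM i]
  have h := tendsto_measure_iUnion_atTop (μ := μ) hmono
  rw [hunion] at h
  exact (ENNReal.tendsto_toReal (measure_ne_top μ _)).comp h

lemma ppart_scale (hmev : IsMEVFrechet μ X) (I : Finset (Fin d)) (a : Fin d → ℝ)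
    (ha : ∀ j ∈ I, 0 < a j) {t : ℝ} (ht : 0 < t) :
    (μ {ω | ∀ j ∈ I, X j ω ≤ t * a j}).toReal ^ t
      = (μ {ω | ∀ j ∈ I, X j ω ≤ a j}).toReal := by
  have h1 := tendsto_part (μ := μ) (X := X) I a 1 one_pos
  have ht' := tendsto_part (μ := μ) (X := X) I a t ht
  simp only [one_mul] at h1
  have heq : ∀ n : ℕ,
      jointCDF μ X (fun i => if i ∈ I then t * a i else t * ((n:ℝ)+1)) ^ t
        = jointCDF μ X (fun i => if i ∈ I then a i else ((n:ℝ)+1)) := by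
    intro n
    have hpos : ∀ i, (0:ℝ) < if i ∈ I then a i else ((n:ℝ)+1) := by
      intro i
      by_cases h : i ∈ I
      · simpa [h] using ha i h
      · simp only [if_neg h]; positivity
    have hms := hmev.maxStable t ht (fun i => if i ∈ I then a i else ((n:ℝ)+1)) hpos
    convert hms using 3
    ext i; by_cases h : i ∈ I <;> simp [h]
  have hL : Tendsto (fun n : ℕ =>
      jointCDF μ X (fun i => if i ∈ I then t * a i else t * ((n:ℝ)+1)) ^ t) atTop
      (nhds ((μ {ω | ∀ j ∈ I, X j ω ≤ t * a j}).toReal ^ t)) :=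
    ht'.rpow_const (Or.inr ht.le)
  rw [funext heq] at hL
  exact tendsto_nhds_unique hL h1

lemma ppart_pos (hmev : IsMEVFrechet μ X) (I : Finset (Fin d)) (a : Fin d → ℝ)
    (ha : ∀ j ∈ I, 0 < a j) :
    0 < (μ {ω | ∀ j ∈ I, X j ω ≤ a j}).toReal := by
  have hsum : Tendsto (fun t : ℝ => ∑ j ∈ I, (1 - Real.exp (-(t * a j)⁻¹))) atTop (nhds 0) := by
    have hterm : ∀ j ∈ I, Tendsto (fun t : ℝ => 1 - Real.exp (-(t * a j)⁻¹)) atTop (nhds 0) := by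
      intro j hj
      have h1 : Tendsto (fun t : ℝ => t * a j) atTop atTop :=
        Tendsto.atTop_mul_const (ha j hj) tendsto_id
      have h2 : Tendsto (fun t : ℝ => (t * a j)⁻¹) atTop (nhds 0) := h1.inv_tendsto_atTop
      have h3 : Tendsto (fun t : ℝ => Real.exp (-(t * a j)⁻¹)) atTop (nhds 1) := by
        have := (Real.continuous_exp.tendsto (-0)).comp (h2.neg)
        simpa [Function.comp_def] using this
      have := tendsto_const_nhds (x := (1:ℝ)) (f := atTop) |>.sub h3
      simpa using this
    have := tendsto_finset_sum I hterm
    simpa using this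
  have hev : ∀ᶠ t : ℝ in atTop,
      (∑ j ∈ I, (1 - Real.exp (-(t * a j)⁻¹))) < 1 ∧ 0 < t :=
    (hsum.eventually_lt_const one_pos).and (eventually_gt_atTop 0)
  obtain ⟨t, ht1, htpos⟩ := hev.exists
  have hAmeas : MeasurableSet {ω | ∀ j ∈ I, X j ω ≤ t * a j} :=
    measSet_part hmev.meas I _
  have hcompl : (μ ({ω | ∀ j ∈ I, X j ω ≤ t * a j}ᶜ)).toReal
      ≤ ∑ j ∈ I, (1 - Real.exp (-(t * a j)⁻¹)) := by
    have hAc : {ω | ∀ j ∈ I, X j ω ≤ t * a j}ᶜ ⊆ ⋃ j ∈ I, {ω | t * a j < X j ω} := by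
      intro ω hω
      simp only [Set.mem_compl_iff, Set.mem_setOf_eq, not_forall] at hω
      obtain ⟨j, hj, hX⟩ := hω
      exact Set.mem_biUnion hj (lt_of_not_ge hX)
    have h1 : μ ({ω | ∀ j ∈ I, X j ω ≤ t * a j}ᶜ) ≤ ∑ j ∈ I, μ {ω | t * a j < X j ω} :=
      le_trans (measure_mono hAc) (measure_biUnion_finset_le I _)
    have h2 := ENNReal.toReal_mono (by
      refine (lt_of_le_of_lt (Finset.sum_le_sum fun j _ => prob_le_one) ?_).ne
      simp only [Finset.sum_const, nsmul_eq_mul]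
      exact ENNReal.mul_lt_top (by simp) (by simp)) h1
    rw [ENNReal.toReal_sum (fun j _ => measure_ne_top μ _)] at h2
    refine le_trans h2 (Finset.sum_le_sum fun j hj => ?_)
    have hc : {ω | t * a j < X j ω} = {ω | X j ω ≤ t * a j}ᶜ := by ext; simp
    rw [hc, prob_compl_eq_one_sub (measurableSet_le (hmev.meas j) measurable_const),
      ENNReal.toReal_sub_of_le prob_le_one ENNReal.one_ne_top, ENNReal.toReal_one]
    have hfr := hmev.frechet j (t * a j) (by have := ha j hj; positivity)
    rw [margCDF] at hfr
    rw [hfr]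
  have hadd : (μ {ω | ∀ j ∈ I, X j ω ≤ t * a j}).toReal
      + (μ ({ω | ∀ j ∈ I, X j ω ≤ t * a j}ᶜ)).toReal = 1 := by
    rw [← ENNReal.toReal_add (measure_ne_top μ _) (measure_ne_top μ _),
      measure_add_measure_compl hAmeas, measure_univ, ENNReal.toReal_one]
  have hPt : 0 < (μ {ω | ∀ j ∈ I, X j ω ≤ t * a j}).toReal := by linarith
  rw [← ppart_scale hmev I a ha htpos]
  exact Real.rpow_pos_of_pos hPt t

lemma integral_sup' (hmev : IsMEVFrechet μ X) (I : Finset (Fin d)) (hI : I.Nonempty)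
    (w : Fin d → ℝ) (hw : ∀ j ∈ I, 0 < w j) :
    ∫ ω, (I.sup' hI fun j => margCDF μ X j (X j ω) ^ w j) ∂μ
      = (-Real.log (μ {ω | ∀ j ∈ I, X j ω ≤ w j}).toReal)
        / (-Real.log (μ {ω | ∀ j ∈ I, X j ω ≤ w j}).toReal + 1) := by
  set c := (μ {ω | ∀ j ∈ I, X j ω ≤ w j}).toReal with hc
  have hcpos : 0 < c := ppart_pos hmev I w hw
  have hcle : c ≤ 1 := by
    have := ENNReal.toReal_mono ENNReal.one_ne_top
      (prob_le_one (μ := μ) (s := {ω | ∀ j ∈ I, X j ω ≤ w j}))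
    simpa using this
  set θ := -Real.log c with hθ
  have hθ0 : 0 ≤ θ := by
    have := Real.log_nonpos hcpos.le hcle
    simp only [hθ]; linarith
  set Y := fun ω => I.sup' hI fun j => margCDF μ X j (X j ω) ^ w j with hY
  have hYmeas : Measurable Y := by
    have : ∀ j ∈ I, Measurable fun ω => margCDF μ X j (X j ω) ^ w j := by
      intro j hj
      exact (Real.continuous_rpow_const (hw j hj).le).measurable.comp
        (((margCDF_mono (μ := μ) j).measurable).comp (hmev.meas j))
    have hm := Finset.measurable_sup' hI this
    have : (I.sup' hI fun j ω => margCDF μ X j (X j ω) ^ w j)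
        = Y := by
      funext ω
      rw [hY, Finset.sup'_apply]
    rwa [this] at hm
  have hY0 : ∀ ω, 0 ≤ Y ω := by
    intro ω
    obtain ⟨j, hj⟩ := hI
    rw [hY]
    exact le_trans (Real.rpow_nonneg (margCDF_nonneg j _) _)
      (Finset.le_sup' (fun j => margCDF μ X j (X j ω) ^ w j) hj)
  have hY1 : ∀ ω, Y ω ≤ 1 := fun ω => Finset.sup'_le _ _ fun j hj =>
    Real.rpow_le_one (margCDF_nonneg j _) (margCDF_le_one j _) (hw j hj).le
  have hYint : Integrable Y μ :=
    ⟨hYmeas.aestronglyMeasurable, HasFiniteIntegral.of_bounded (C := 1)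
      (Eventually.of_forall fun ω => by
        rw [Real.norm_eq_abs, abs_le]
        exact ⟨by linarith [hY0 ω], hY1 ω⟩)⟩
  have hcdf : ∀ u : ℝ, 0 < u → u < 1 → (μ {ω | Y ω ≤ u}).toReal = u ^ θ := by
    intro u hu hu1
    have hlogu : Real.log u < 0 := Real.log_neg hu hu1
    set t := (-Real.log u)⁻¹ with htdef
    have htpos : 0 < t := by rw [htdef]; rw [inv_pos]; linarith
    have hsetEq : μ {ω | Y ω ≤ u} = μ {ω | ∀ j ∈ I, X j ω ≤ t * w j} := by
      apply measure_congr
      rw [Filter.eventuallyEq_set]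
      have hpos : ∀ᵐ ω ∂μ, ∀ j, 0 < X j ω := by
        rw [ae_all_iff]
        exact fun j => ae_pos hmev j
      filter_upwards [hpos] with ω hω'
      have hω : ∀ j ∈ I, 0 < X j ω := fun j _ => hω' j
      simp only [Set.mem_setOf_eq, hY, Finset.sup'_le_iff]
      refine forall₂_congr fun j hj => ?_
      rw [hmev.frechet j _ (hω j hj), ← Real.exp_mul]
      rw [show u = Real.exp (Real.log u) from (Real.exp_log hu).symm, Real.exp_le_exp]
      have hXj := hω j hj
      have hwj := hw j hj
      have hnl : (0:ℝ) < -Real.log u := by linarith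
      rw [htdef, neg_mul, neg_le, ← div_eq_inv_mul, ← div_eq_inv_mul,
        le_div_iff₀ hXj, le_div_iff₀ hnl, mul_comm]
    rw [hsetEq]
    have hsc := ppart_scale hmev I w hw htpos
    have hz : (μ {ω | ∀ j ∈ I, X j ω ≤ t * w j}).toReal = c ^ t⁻¹ := by
      have h' := congrArg (fun z : ℝ => z ^ t⁻¹) hsc
      simp only [Real.rpow_rpow_inv (ENNReal.toReal_nonneg :
        (0:ℝ) ≤ (μ {ω | ∀ j ∈ I, X j ω ≤ t * w j}).toReal) htpos.ne'] at h'
      rw [h', hc]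
    rw [hz, htdef, inv_inv]
    rw [Real.rpow_def_of_pos hcpos, Real.rpow_def_of_pos hu]
    congr 1
    rw [hθ]
    ring
  have htail : ∀ u ∈ Set.Ioc (0:ℝ) 1, (μ {ω | u < Y ω}).toReal = 1 - u ^ θ := by
    rintro u ⟨hu, hu1⟩
    rcases eq_or_lt_of_le hu1 with rfl | hu1'
    · have hempty : {ω | (1:ℝ) < Y ω} = ∅ :=
        Set.eq_empty_iff_forall_notMem.2 fun ω hω => absurd (hY1 ω) (not_le.2 hω)
      rw [hempty]
      simp [Real.one_rpow]
    · have hcm : {ω | u < Y ω} = {ω | Y ω ≤ u}ᶜ := by ext; simp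
      rw [hcm, prob_compl_eq_one_sub (measurableSet_le hYmeas measurable_const),
        ENNReal.toReal_sub_of_le prob_le_one ENNReal.one_ne_top, ENNReal.toReal_one,
        hcdf u hu hu1']
  rw [hYint.integral_eq_integral_meas_lt (Eventually.of_forall hY0)]
  have hin : Set.EqOn (fun t : ℝ => (μ {a | t < Y a}).toReal)
      (Set.indicator (Set.Ioc (0:ℝ) 1) (fun t => 1 - t ^ θ)) (Set.Ioi 0) := by
    intro t ht
    rw [Set.mem_Ioi] at ht
    dsimp only
    by_cases h : t ≤ 1
    · rw [Set.indicator_of_mem (Set.mem_Ioc.mpr ⟨ht, h⟩)]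
      exact htail t (Set.mem_Ioc.mpr ⟨ht, h⟩)
    · push_neg at h
      rw [Set.indicator_of_notMem (fun hm => absurd (Set.mem_Ioc.mp hm).2 (not_le.2 h))]
      have hempty : {a | t < Y a} = ∅ :=
        Set.eq_empty_iff_forall_notMem.2 fun ω hω =>
          absurd (lt_trans (lt_of_le_of_lt (hY1 ω) h) hω) (lt_irrefl _)
      rw [hempty]
      simp
  simp only [measureReal_def]
  rw [setIntegral_congr_fun measurableSet_Ioi hin, integral_indicator measurableSet_Ioc,
    Measure.restrict_restrict measurableSet_Ioc]
  have hre : Set.Ioc (0:ℝ) 1 ∩ Set.Ioi 0 = Set.Ioc 0 1 := by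
    rw [Set.inter_eq_left]
    exact Set.Ioc_subset_Ioi_self
  rw [hre, ← intervalIntegral.integral_of_le (zero_le_one)]
  rw [intervalIntegral.integral_sub intervalIntegrable_const
    (intervalIntegral.intervalIntegrable_rpow' (by linarith))]
  rw [integral_rpow (Or.inl (by linarith)), intervalIntegral.integral_const]
  have hθ1 : θ + 1 ≠ 0 := by positivity
  rw [Real.one_rpow, Real.zero_rpow hθ1]
  simp only [smul_eq_mul, sub_zero, mul_one]
  field_simp
  ring

end Aux
section Aux2

open ProbabilityTheory

variable {Ω : Type*} [MeasurableSpace Ω] {μ : Measure Ω} [IsProbabilityMeasure μ] {d : ℕ}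

lemma slln_aux (Xs : ℕ → Ω → Fin d → ℝ)
    (hmeas : ∀ n, Measurable (Xs n))
    (hindep : ProbabilityTheory.iIndepFun Xs μ)
    (hident : ∀ n, Measure.map (Xs n) μ = Measure.map (Xs 0) μ)
    (g : (Fin d → ℝ) → ℝ) (hg : Measurable g) (hb : ∀ v, |g v| ≤ 1) :
    ∀ᵐ ω ∂μ, Tendsto (fun n : ℕ => (n:ℝ)⁻¹ * ∑ i ∈ Finset.range n, g (Xs i ω)) atTop
      (nhds (∫ ω, g (Xs 0 ω) ∂μ)) := by
  have hint : Integrable (fun ω => g (Xs 0 ω)) μ :=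
    ⟨(hg.comp (hmeas 0)).aestronglyMeasurable,
      HasFiniteIntegral.of_bounded (C := 1) (Eventually.of_forall fun ω => by
        simpa [Real.norm_eq_abs] using hb (Xs 0 ω))⟩
  have hindep' : Pairwise (Function.onFun (ProbabilityTheory.IndepFun · · μ) fun i ω => g (Xs i ω)) :=
    fun i j hij => ((hindep.indepFun hij).comp hg hg)
  have hident' : ∀ i, ProbabilityTheory.IdentDistrib (fun ω => g (Xs i ω))
      (fun ω => g (Xs 0 ω)) μ μ := fun i =>
    ProbabilityTheory.IdentDistrib.comp
      ⟨(hmeas i).aemeasurable, (hmeas 0).aemeasurable, hident i⟩ hg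
  have h := ProbabilityTheory.strong_law_ae_real _ hint hindep' hident'
  filter_upwards [h] with ω hω
  have he : (fun n : ℕ => (n:ℝ)⁻¹ * ∑ i ∈ Finset.range n, g (Xs i ω))
      = fun n : ℕ => (∑ i ∈ Finset.range n, g (Xs i ω)) / n := by
    funext n; rw [div_eq_inv_mul]
  rw [he]
  exact hω

lemma tendsto_ratio {θ : ℝ} (hθ : 0 ≤ θ) {M : ℕ → ℝ}
    (h : Tendsto M atTop (nhds (θ / (θ + 1)))) :
    Tendsto (fun n => M n / (1 - M n)) atTop (nhds θ) := by
  have hθ1 : (0:ℝ) < θ + 1 := by linarith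
  have he : 1 - θ/(θ+1) = 1/(θ+1) := by field_simp; ring
  have h2 : Tendsto (fun n => 1 - M n) atTop (nhds (1 - θ/(θ+1))) := tendsto_const_nhds.sub h
  have hne : 1 - θ/(θ+1) ≠ 0 := by rw [he]; positivity
  have h3 := h.div h2 hne
  have hv : θ/(θ+1) / (1 - θ/(θ+1)) = θ := by rw [he]; field_simp
  rwa [hv] at h3

end Aux2

/-- Sample mean `n⁻¹ Σ_{i<n} M(I)^{1/x}` of the `i.i.d.` copies, where
`M(I) = max_{j∈I} F_j(X_j)` and `F_j` is the common marginal distribution function. -/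
noncomputable def MbarI {Ω : Type*} [MeasurableSpace Ω] (μ : Measure Ω) {d : ℕ}
    (Xs : ℕ → Ω → Fin d → ℝ) (I : Finset (Fin d)) (hI : I.Nonempty) (x : ℝ)
    (n : ℕ) (ω : Ω) : ℝ :=
  (n : ℝ)⁻¹ * ∑ i ∈ Finset.range n,
    I.sup' hI fun j => margCDF μ (fun k ω' => Xs 0 ω' k) j (Xs i ω j) ^ x⁻¹

/-- Sample mean `n⁻¹ Σ_{i<n} (M(I₁)^{1/x} ∨ M(I₂)^{1/y})`. -/
noncomputable def MbarII {Ω : Type*} [MeasurableSpace Ω] (μ : Measure Ω) {d : ℕ}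
    (Xs : ℕ → Ω → Fin d → ℝ) (I₁ I₂ : Finset (Fin d)) (h1 : I₁.Nonempty) (h2 : I₂.Nonempty)
    (x y : ℝ) (n : ℕ) (ω : Ω) : ℝ :=
  (n : ℝ)⁻¹ * ∑ i ∈ Finset.range n,
    max (I₁.sup' h1 fun j => margCDF μ (fun k ω' => Xs 0 ω' k) j (Xs i ω j) ^ x⁻¹)
      (I₂.sup' h2 fun j => margCDF μ (fun k ω' => Xs 0 ω' k) j (Xs i ω j) ^ y⁻¹)

/-- The plug-in estimator `Λ̃_U^{(I₁,I₂)}(x,y) = xε̃_{I₁} + yε̃_{I₂} - l̃^{(I₁,I₂)}(x⁻¹,y⁻¹)`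
built from the sample means via `m ↦ m/(1-m)`. -/
noncomputable def lambdaUTilde {Ω : Type*} [MeasurableSpace Ω] (μ : Measure Ω) {d : ℕ}
    (Xs : ℕ → Ω → Fin d → ℝ) (I₁ I₂ : Finset (Fin d)) (h1 : I₁.Nonempty) (h2 : I₂.Nonempty)
    (x y : ℝ) (n : ℕ) (ω : Ω) : ℝ :=
  MbarI μ Xs I₁ h1 x n ω / (1 - MbarI μ Xs I₁ h1 x n ω)
    + MbarI μ Xs I₂ h2 y n ω / (1 - MbarI μ Xs I₂ h2 y n ω)
    - MbarII μ Xs I₁ I₂ h1 h2 x y n ω / (1 - MbarII μ Xs I₁ I₂ h1 h2 x y n ω)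

/-- Strong consistency of the plug-in estimator:
`Λ̃_U^{(I₁,I₂)}(x,y) → Λ_U^{(I₁,I₂)}(x,y)` almost surely, and in particular
`ε̃_{(I₁,I₂)} = Λ̃_U^{(I₁,I₂)}(1,1) → ε_{(I₁,I₂)} = ε_{I₁} + ε_{I₂} - ε_{I₁∪I₂}` a.s. -/
theorem statement18 {Ω : Type*} [MeasurableSpace Ω] (μ : Measure Ω) [IsProbabilityMeasure μ]
    {d : ℕ} (Xs : ℕ → Ω → Fin d → ℝ)
    (hmeas : ∀ n, Measurable (Xs n))
    (hindep : ProbabilityTheory.iIndepFun Xs μ)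
    (hident : ∀ n, Measure.map (Xs n) μ = Measure.map (Xs 0) μ)
    (hmev : IsMEVFrechet μ (fun i ω => Xs 0 ω i))
    (I₁ I₂ : Finset (Fin d)) (h1 : I₁.Nonempty) (h2 : I₂.Nonempty) (hdisj : Disjoint I₁ I₂)
    (x y : ℝ) (hx : 0 < x) (hy : 0 < y) :
    (∀ᵐ ω ∂μ, Tendsto (fun n => lambdaUTilde μ Xs I₁ I₂ h1 h2 x y n ω) atTop
      (nhds (x * extCoef μ (fun i ω' => Xs 0 ω' i) I₁
        + y * extCoef μ (fun i ω' => Xs 0 ω' i) I₂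
        - mevL μ (fun i ω' => Xs 0 ω' i) I₁ I₂ x⁻¹ y⁻¹))) ∧
    (∀ᵐ ω ∂μ, Tendsto (fun n => lambdaUTilde μ Xs I₁ I₂ h1 h2 1 1 n ω) atTop
      (nhds (extCoef μ (fun i ω' => Xs 0 ω' i) I₁
        + extCoef μ (fun i ω' => Xs 0 ω' i) I₂
        - extCoef μ (fun i ω' => Xs 0 ω' i) (I₁ ∪ I₂)))) := by
  classical
  have hXmeas : ∀ i : Fin d, Measurable fun ω => Xs 0 ω i := hmev.meas
  -- master a.e. convergence for sample means of sup-type functionals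
  have master : ∀ (I : Finset (Fin d)) (hI : I.Nonempty) (w : Fin d → ℝ),
      (∀ j ∈ I, 0 < w j) →
      ∀ᵐ ω ∂μ, Tendsto (fun n : ℕ => (n:ℝ)⁻¹ * ∑ i ∈ Finset.range n,
          I.sup' hI fun j => margCDF μ (fun k ω' => Xs 0 ω' k) j (Xs i ω j) ^ w j) atTop
        (nhds (-Real.log (μ {ω | ∀ j ∈ I, Xs 0 ω j ≤ w j}).toReal /
          (-Real.log (μ {ω | ∀ j ∈ I, Xs 0 ω j ≤ w j}).toReal + 1))) := by
    intro I hI w hw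
    set g : (Fin d → ℝ) → ℝ :=
      fun v => I.sup' hI fun j => margCDF μ (fun k ω' => Xs 0 ω' k) j (v j) ^ w j with hgdef
    have hgmeas : Measurable g := by
      have hterm : ∀ j ∈ I, Measurable fun v : Fin d → ℝ =>
          margCDF μ (fun k ω' => Xs 0 ω' k) j (v j) ^ w j := fun j hj =>
        (Real.continuous_rpow_const (hw j hj).le).measurable.comp
          ((margCDF_mono (μ := μ) (X := fun k ω' => Xs 0 ω' k) j).measurable.comp
            (measurable_pi_apply j))
      have hm := Finset.measurable_sup' hI hterm
      have he : (I.sup' hI fun j (v : Fin d → ℝ) =>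
          margCDF μ (fun k ω' => Xs 0 ω' k) j (v j) ^ w j) = g := by
        funext v; rw [hgdef, Finset.sup'_apply]
      rwa [he] at hm
    have hgb : ∀ v, |g v| ≤ 1 := by
      intro v
      rw [abs_le]
      constructor
      · obtain ⟨j, hj⟩ := hI
        rw [hgdef]
        refine le_trans ?_
          (Finset.le_sup' (fun j => margCDF μ (fun k ω' => Xs 0 ω' k) j (v j) ^ w j) hj)
        exact neg_nonpos.mpr zero_le_one |>.trans
          (Real.rpow_nonneg (margCDF_nonneg j _) _)
      · exact Finset.sup'_le _ _ fun j hj =>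
          Real.rpow_le_one (margCDF_nonneg j _) (margCDF_le_one j _) (hw j hj).le
    have h := slln_aux Xs hmeas hindep hident g hgmeas hgb
    have hE : ∫ ω, g (Xs 0 ω) ∂μ
        = -Real.log (μ {ω | ∀ j ∈ I, Xs 0 ω j ≤ w j}).toReal /
          (-Real.log (μ {ω | ∀ j ∈ I, Xs 0 ω j ≤ w j}).toReal + 1) :=
      integral_sup' hmev I hI w hw
    rwa [hE] at h
  -- nonnegativity of the exponents
  have hθnn : ∀ (I : Finset (Fin d)) (w : Fin d → ℝ), (∀ j ∈ I, 0 < w j) →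
      0 ≤ -Real.log (μ {ω | ∀ j ∈ I, Xs 0 ω j ≤ w j}).toReal := by
    intro I w hw
    have hpos : 0 < (μ {ω | ∀ j ∈ I, Xs 0 ω j ≤ w j}).toReal := ppart_pos hmev I w hw
    have hle : (μ {ω | ∀ j ∈ I, Xs 0 ω j ≤ w j}).toReal ≤ 1 := by
      have := ENNReal.toReal_mono ENNReal.one_ne_top
        (prob_le_one (μ := μ) (s := {ω | ∀ j ∈ I, Xs 0 ω j ≤ w j}))
      simpa using this
    have := Real.log_nonpos hpos.le hle
    linarith
  -- identification of the exponents with the extremal coefficients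
  have hθI : ∀ (I : Finset (Fin d)), ∀ z : ℝ, 0 < z →
      -Real.log (μ {ω | ∀ j ∈ I, Xs 0 ω j ≤ z⁻¹}).toReal
        = z * extCoef μ (fun i ω' => Xs 0 ω' i) I := by
    intro I z hz
    have hsc := ppart_scale (μ := μ) hmev I (fun _ => (1:ℝ)) (fun j _ => one_pos)
      (inv_pos.2 hz)
    simp only [mul_one] at hsc
    have hpos : 0 < (μ {ω | ∀ j ∈ I, Xs 0 ω j ≤ z⁻¹}).toReal :=
      ppart_pos hmev I (fun _ => z⁻¹) (fun j _ => inv_pos.2 hz)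
    have hlog := congrArg Real.log hsc
    rw [Real.log_rpow hpos] at hlog
    have hext : extCoef μ (fun i ω' => Xs 0 ω' i) I
        = -Real.log (μ {ω | ∀ j ∈ I, Xs 0 ω j ≤ (1:ℝ)}).toReal := by
      unfold extCoef mevL
      have hset : {ω | (∀ i ∈ I, Xs 0 ω i ≤ (1:ℝ)) ∧ ∀ j ∈ (∅ : Finset (Fin d)), Xs 0 ω j ≤ 1}
          = {ω | ∀ j ∈ I, Xs 0 ω j ≤ (1:ℝ)} := by
        ext ω; simp
      rw [hset]
    rw [hext, ← hlog]
    field_simp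
    simp only [mul_comm]
  -- the union set identity
  have hset12 : ∀ u v : ℝ,
      {ω | ∀ j ∈ I₁ ∪ I₂, Xs 0 ω j ≤ (if j ∈ I₁ then u else v)}
        = {ω | (∀ i ∈ I₁, Xs 0 ω i ≤ u) ∧ ∀ j ∈ I₂, Xs 0 ω j ≤ v} := by
    intro u v
    ext ω
    simp only [Set.mem_setOf_eq, Finset.mem_union]
    constructor
    · intro h
      refine ⟨fun i hi => ?_, fun j hj => ?_⟩
      · have := h i (Or.inl hi); rwa [if_pos hi] at this
      · have := h j (Or.inr hj)
        rwa [if_neg (Finset.disjoint_right.mp hdisj hj)] at this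
    · rintro ⟨ha, hb⟩ j hj
      by_cases hji : j ∈ I₁
      · rw [if_pos hji]; exact ha j hji
      · rw [if_neg hji]; exact hb j (hj.resolve_left hji)
  have h12 : (I₁ ∪ I₂).Nonempty := h1.mono Finset.subset_union_left
  -- main statement for arbitrary positive x, y
  have main : ∀ x y : ℝ, 0 < x → 0 < y →
      ∀ᵐ ω ∂μ, Tendsto (fun n => lambdaUTilde μ Xs I₁ I₂ h1 h2 x y n ω) atTop
        (nhds (x * extCoef μ (fun i ω' => Xs 0 ω' i) I₁
          + y * extCoef μ (fun i ω' => Xs 0 ω' i) I₂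
          - mevL μ (fun i ω' => Xs 0 ω' i) I₁ I₂ x⁻¹ y⁻¹)) := by
    intro x y hx hy
    set θ1 := -Real.log (μ {ω | ∀ j ∈ I₁, Xs 0 ω j ≤ x⁻¹}).toReal with hθ1def
    set θ2 := -Real.log (μ {ω | ∀ j ∈ I₂, Xs 0 ω j ≤ y⁻¹}).toReal with hθ2def
    set θ12 := -Real.log
      (μ {ω | (∀ i ∈ I₁, Xs 0 ω i ≤ x⁻¹) ∧ ∀ j ∈ I₂, Xs 0 ω j ≤ y⁻¹}).toReal with hθ12def
    have hm1 : ∀ᵐ ω ∂μ, Tendsto (fun n => MbarI μ Xs I₁ h1 x n ω) atTop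
        (nhds (θ1 / (θ1 + 1))) := master I₁ h1 (fun _ => x⁻¹) (fun j _ => inv_pos.2 hx)
    have hm2 : ∀ᵐ ω ∂μ, Tendsto (fun n => MbarI μ Xs I₂ h2 y n ω) atTop
        (nhds (θ2 / (θ2 + 1))) := master I₂ h2 (fun _ => y⁻¹) (fun j _ => inv_pos.2 hy)
    have hm12' := master (I₁ ∪ I₂) h12 (fun j => if j ∈ I₁ then x⁻¹ else y⁻¹)
      (fun j _ => by by_cases h : j ∈ I₁ <;> simp [h, inv_pos.2 hx, inv_pos.2 hy])
    have hMbarIIeq : ∀ n (ω : Ω), MbarII μ Xs I₁ I₂ h1 h2 x y n ω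
        = (n:ℝ)⁻¹ * ∑ i ∈ Finset.range n, (I₁ ∪ I₂).sup' h12
            fun j => margCDF μ (fun k ω' => Xs 0 ω' k) j (Xs i ω j)
              ^ (if j ∈ I₁ then x⁻¹ else y⁻¹) := by
      intro n ω
      unfold MbarII
      congr 1
      refine Finset.sum_congr rfl fun i _ => ?_
      rw [Finset.sup'_union h1 h2]
      congr 1
      · exact (Finset.sup'_congr h1 rfl fun j hj => by rw [if_pos hj]).symm
      · exact (Finset.sup'_congr h2 rfl fun j hj => by
          rw [if_neg (Finset.disjoint_right.mp hdisj hj)]).symm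
    have hm12 : ∀ᵐ ω ∂μ, Tendsto (fun n => MbarII μ Xs I₁ I₂ h1 h2 x y n ω) atTop
        (nhds (θ12 / (θ12 + 1))) := by
      filter_upwards [hm12'] with ω hω
      have he : (fun n => MbarII μ Xs I₁ I₂ h1 h2 x y n ω)
          = fun n : ℕ => (n:ℝ)⁻¹ * ∑ i ∈ Finset.range n, (I₁ ∪ I₂).sup' h12
              fun j => margCDF μ (fun k ω' => Xs 0 ω' k) j (Xs i ω j)
                ^ (if j ∈ I₁ then x⁻¹ else y⁻¹) := funext fun n => hMbarIIeq n ω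
      rw [he]
      have hv : θ12 = -Real.log
          (μ {ω | ∀ j ∈ I₁ ∪ I₂, Xs 0 ω j ≤ (if j ∈ I₁ then x⁻¹ else y⁻¹)}).toReal := by
        rw [hθ12def, hset12]
      rw [hv]
      exact hω
    have hnn1 : 0 ≤ θ1 := hθnn I₁ (fun _ => x⁻¹) (fun j _ => inv_pos.2 hx)
    have hnn2 : 0 ≤ θ2 := hθnn I₂ (fun _ => y⁻¹) (fun j _ => inv_pos.2 hy)
    have hnn12 : 0 ≤ θ12 := by
      have := hθnn (I₁ ∪ I₂) (fun j => if j ∈ I₁ then x⁻¹ else y⁻¹)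
        (fun j _ => by by_cases h : j ∈ I₁ <;> simp [h, inv_pos.2 hx, inv_pos.2 hy])
      rw [hset12] at this
      exact this
    have hval1 : θ1 = x * extCoef μ (fun i ω' => Xs 0 ω' i) I₁ := hθI I₁ x hx
    have hval2 : θ2 = y * extCoef μ (fun i ω' => Xs 0 ω' i) I₂ := hθI I₂ y hy
    have hval12 : θ12 = mevL μ (fun i ω' => Xs 0 ω' i) I₁ I₂ x⁻¹ y⁻¹ := by
      rw [hθ12def]; rfl
    filter_upwards [hm1, hm2, hm12] with ω hω1 hω2 hω12
    have t1 := tendsto_ratio hnn1 hω1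
    have t2 := tendsto_ratio hnn2 hω2
    have t12 := tendsto_ratio hnn12 hω12
    have hcomb := (t1.add t2).sub t12
    rw [hval1, hval2, hval12] at hcomb
    exact hcomb
  refine ⟨main x y hx hy, ?_⟩
  have h := main 1 1 one_pos one_pos
  have hval : (1:ℝ) * extCoef μ (fun i ω' => Xs 0 ω' i) I₁
      + 1 * extCoef μ (fun i ω' => Xs 0 ω' i) I₂
      - mevL μ (fun i ω' => Xs 0 ω' i) I₁ I₂ 1⁻¹ 1⁻¹
      = extCoef μ (fun i ω' => Xs 0 ω' i) I₁ + extCoef μ (fun i ω' => Xs 0 ω' i) I₂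
        - extCoef μ (fun i ω' => Xs 0 ω' i) (I₁ ∪ I₂) := by
    rw [one_mul, one_mul, inv_one]
    congr 1
    unfold extCoef mevL
    have hset : {ω | (∀ i ∈ I₁ ∪ I₂, Xs 0 ω i ≤ (1:ℝ))
        ∧ ∀ j ∈ (∅ : Finset (Fin d)), Xs 0 ω j ≤ 1}
        = {ω | (∀ i ∈ I₁, Xs 0 ω i ≤ (1:ℝ)) ∧ ∀ j ∈ I₂, Xs 0 ω j ≤ 1} := by
      ext ω
      simp [Finset.mem_union, or_imp, forall_and]
    rw [hset]
  rw [hval] at h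
  exact h
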